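/- Let k ≥ 1 be an integer, m > 0, a > 0, s > 0 and R > 0, and let ν be a nonnegative finite Borel measure on ℝ^k. Then there exists a constant c = c(k, m, a, s) > 0 such that for every x ∈ ℝ^k, ∫₀^{R} t^{a−1} ( ∫_{ℝ^k} (t + |x−y|)^{−m} dν(y) )^{s} dt ≥ c sup_{0 < r < R/2} ν(B(x,r))^{s} r^{a − ms}. -/

import Mathlib

open MeasureTheory Set Metric

/-- Lower bound: the weighted integral of the `s`-th power of the
Riesz-type potential dominates the maximal quantity `sup_{0<r<R/2} ν(B(x,r))^s r^{a−ms}`,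
with a constant depending only on `k, m, a, s` (independent of `R` and `ν`). -/
theorem stmt_13 (k : ℕ) (hk : 1 ≤ k) (m a s : ℝ) (hm : 0 < m) (ha : 0 < a) (hs : 0 < s) :
    ∃ c > 0, ∀ R : ℝ, 0 < R → ∀ ν : Measure (EuclideanSpace ℝ (Fin k)),
      IsFiniteMeasure ν → ∀ x : EuclideanSpace ℝ (Fin k),
      ENNReal.ofReal c *
          ⨆ r ∈ Set.Ioo (0 : ℝ) (R / 2), (ν (ball x r)) ^ s * ENNReal.ofReal (r ^ (a - m * s)) ≤
        ∫⁻ t in Set.Ioc (0 : ℝ) R, ENNReal.ofReal (t ^ (a - 1)) *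
          (∫⁻ y, ENNReal.ofReal ((t + dist x y) ^ (-m)) ∂ν) ^ s := by
  set C₁ : ℝ := min 1 (2 ^ (a - 1)) with hC₁
  have hC₁pos : 0 < C₁ := lt_min one_pos (Real.rpow_pos_of_pos two_pos _)
  refine ⟨C₁ * 3 ^ (-(m * s)), by positivity, ?_⟩
  intro R hR ν hν x
  rw [ENNReal.mul_iSup]
  refine iSup_le fun r => ?_
  rw [ENNReal.mul_iSup]
  refine iSup_le fun hr => ?_
  obtain ⟨hr0, hr2⟩ := hr
  have h2r : 2 * r ≤ R := by linarith
  have hsub : Ioc r (2 * r) ⊆ Ioc (0 : ℝ) R :=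
    fun t ht => ⟨hr0.trans ht.1, ht.2.trans h2r⟩
  refine le_trans ?_ (lintegral_mono_set hsub)
  -- pointwise lower bound on Ioc r (2r)
  have hpt : ∀ t ∈ Ioc r (2 * r),
      ENNReal.ofReal (C₁ * r ^ (a - 1)) *
        (ENNReal.ofReal ((3 * r) ^ (-m)) ^ s * ν (ball x r) ^ s) ≤
      ENNReal.ofReal (t ^ (a - 1)) *
        (∫⁻ y, ENNReal.ofReal ((t + dist x y) ^ (-m)) ∂ν) ^ s := by
    intro t ht
    have ht0 : 0 < t := hr0.trans ht.1
    have h1 : C₁ * r ^ (a - 1) ≤ t ^ (a - 1) := by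
      rcases le_total 1 a with hA | hA
      · calc C₁ * r ^ (a - 1) ≤ 1 * r ^ (a - 1) := by
              have := (Real.rpow_pos_of_pos hr0 (a - 1)).le
              exact mul_le_mul_of_nonneg_right (min_le_left _ _) this
          _ = r ^ (a - 1) := one_mul _
          _ ≤ t ^ (a - 1) := Real.rpow_le_rpow hr0.le ht.1.le (by linarith)
      · calc C₁ * r ^ (a - 1) ≤ 2 ^ (a - 1) * r ^ (a - 1) := by
              have := (Real.rpow_pos_of_pos hr0 (a - 1)).le
              exact mul_le_mul_of_nonneg_right (min_le_right _ _) this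
          _ = (2 * r) ^ (a - 1) := (Real.mul_rpow (by norm_num) hr0.le).symm
          _ ≤ t ^ (a - 1) := by
              exact Real.rpow_le_rpow_of_nonpos ht0 ht.2 (by linarith)
    have h2 : ENNReal.ofReal ((3 * r) ^ (-m)) * ν (ball x r) ≤
        ∫⁻ y, ENNReal.ofReal ((t + dist x y) ^ (-m)) ∂ν := by
      calc ENNReal.ofReal ((3 * r) ^ (-m)) * ν (ball x r)
          = ∫⁻ _ in ball x r, ENNReal.ofReal ((3 * r) ^ (-m)) ∂ν := by
            rw [setLIntegral_const]
        _ ≤ ∫⁻ y in ball x r, ENNReal.ofReal ((t + dist x y) ^ (-m)) ∂ν := by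
            refine setLIntegral_mono' measurableSet_ball fun y hy => ?_
            refine ENNReal.ofReal_le_ofReal ?_
            have hd : 0 ≤ dist x y := dist_nonneg
            have : t + dist x y ≤ 3 * r := by
              rw [mem_ball'] at hy
              linarith [ht.2, hy.le]
            exact Real.rpow_le_rpow_of_nonpos (by linarith) this (by linarith)
        _ ≤ ∫⁻ y, ENNReal.ofReal ((t + dist x y) ^ (-m)) ∂ν :=
            setLIntegral_le_lintegral _ _
    calc ENNReal.ofReal (C₁ * r ^ (a - 1)) *
          (ENNReal.ofReal ((3 * r) ^ (-m)) ^ s * ν (ball x r) ^ s)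
        = ENNReal.ofReal (C₁ * r ^ (a - 1)) *
          (ENNReal.ofReal ((3 * r) ^ (-m)) * ν (ball x r)) ^ s := by
          rw [ENNReal.mul_rpow_of_nonneg _ _ hs.le]
      _ ≤ ENNReal.ofReal (t ^ (a - 1)) *
          (∫⁻ y, ENNReal.ofReal ((t + dist x y) ^ (-m)) ∂ν) ^ s := by
          exact mul_le_mul (ENNReal.ofReal_le_ofReal h1)
            (ENNReal.rpow_le_rpow h2 hs.le) zero_le zero_le
  have hofr : ENNReal.ofReal ((3 * r) ^ (-m)) ^ s =
      ENNReal.ofReal ((3 * r) ^ (-(m * s))) := by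
    have hb : (0:ℝ) < (3 * r) ^ (-m) := Real.rpow_pos_of_pos (by linarith) _
    rw [show -(m * s) = -m * s by ring,
      Real.rpow_mul (by linarith : (0:ℝ) ≤ 3 * r),
      ENNReal.ofReal_rpow_of_pos hb]
  have hre : C₁ * 3 ^ (-(m * s)) * r ^ (a - m * s) =
      C₁ * r ^ (a - 1) * ((3 * r) ^ (-(m * s)) * r) := by
    rw [Real.mul_rpow (by norm_num) hr0.le]
    have h1 : r ^ (a - m * s) = r ^ (a - 1) * r ^ (-(m * s)) * r ^ (1 : ℝ) := by
      rw [← Real.rpow_add hr0, ← Real.rpow_add hr0]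
      ring_nf
    rw [h1, Real.rpow_one]
    ring
  calc ENNReal.ofReal (C₁ * 3 ^ (-(m * s))) *
        (ν (ball x r) ^ s * ENNReal.ofReal (r ^ (a - m * s)))
      = ENNReal.ofReal (C₁ * 3 ^ (-(m * s)) * r ^ (a - m * s)) * ν (ball x r) ^ s := by
        conv_rhs => rw [ENNReal.ofReal_mul (by positivity : (0:ℝ) ≤ C₁ * 3 ^ (-(m * s)))]
        ring
    _ = ENNReal.ofReal (C₁ * r ^ (a - 1)) *
        (ENNReal.ofReal ((3 * r) ^ (-m)) ^ s * ν (ball x r) ^ s) *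
          volume (Ioc r (2 * r)) := by
        rw [hre, Real.volume_Ioc, show (2 * r - r : ℝ) = r by ring, hofr,
          ENNReal.ofReal_mul (by positivity : (0:ℝ) ≤ C₁ * r ^ (a - 1)),
          ENNReal.ofReal_mul (by positivity : (0:ℝ) ≤ (3 * r) ^ (-(m * s)))]
        ring
    _ = ∫⁻ _ in Ioc r (2 * r), ENNReal.ofReal (C₁ * r ^ (a - 1)) *
        (ENNReal.ofReal ((3 * r) ^ (-m)) ^ s * ν (ball x r) ^ s) :=
        (setLIntegral_const _ _).symm
    _ ≤ _ := setLIntegral_mono' measurableSet_Ioc hpt
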